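/- Let E be a Banach space with the Dunford–Pettis property and let M ⊆ E be a closed subspace such that the quotient E/M is infinite-dimensional and reflexive. Then there is no sequence (V_n) of weakly compact operators on E with ‖Q − Q∘V_n‖ → 0, where Q : E → E/M is the quotient map. In particular E fails the inner W.A.P. -/

import Mathlib

open Filter Topology

/-- A set is weakly compact if it is compact in the weak topology. -/
def IsWeaklyCompact {E : Type*} [SeminormedAddCommGroup E] [NormedSpace ℝ E] (D : Set E) :
    Prop :=
  IsCompact (toWeakSpace ℝ E '' D)

/-- An operator is weakly compact if the image of the closed unit ball is relatively
compact in the weak topology. -/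
def IsWeaklyCompactOp {E F : Type*} [SeminormedAddCommGroup E] [NormedSpace ℝ E]
    [SeminormedAddCommGroup F] [NormedSpace ℝ F] (V : E →L[ℝ] F) : Prop :=
  IsCompact (closure (toWeakSpace ℝ F '' (V '' Metric.closedBall 0 1)))

/-- A sequence is weakly null if it tends to `0` in the weak topology. -/
def WeaklyNull {E : Type*} [SeminormedAddCommGroup E] [NormedSpace ℝ E] (x : ℕ → E) : Prop :=
  Tendsto (fun n => toWeakSpace ℝ E (x n)) atTop (nhds 0)

/-- `E` has the Dunford–Pettis property: weakly compact operators out of `E` map weakly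
null sequences to norm-null sequences. -/
def HasDPP (E : Type) [SeminormedAddCommGroup E] [NormedSpace ℝ E] : Prop :=
  ∀ (F : Type) (_ : SeminormedAddCommGroup F), ∀ (_ : NormedSpace ℝ F) (_ : CompleteSpace F),
    ∀ V : E →L[ℝ] F, IsWeaklyCompactOp V →
      ∀ x : ℕ → E, WeaklyNull x → Tendsto (fun n => ‖V (x n)‖) atTop (nhds 0)

section Helper

open TopologicalSpace

lemma exists_subseq_weak_tendsto {E : Type} [NormedAddCommGroup E] [NormedSpace ℝ E]
    {K : Set (WeakSpace ℝ E)} (hK : IsCompact K) (v : ℕ → E)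
    (hv : ∀ k, toWeakSpace ℝ E (v k) ∈ K) :
    ∃ (y : E) (φ : ℕ → ℕ), StrictMono φ ∧
      Tendsto (fun k => toWeakSpace ℝ E (v (φ k) - y)) atTop (nhds 0) := by
  classical
  set S : Submodule ℝ E := (Submodule.span ℝ (Set.range v)).topologicalClosure with hS
  -- separability of S
  have hSsep : IsSeparable (S : Set E) := by
    have h1 : IsSeparable (Submodule.span ℝ (Set.range v) : Set E) :=
      (Set.countable_range v).isSeparable.span
    rw [hS, Submodule.topologicalClosure_coe]
    exact h1.closure
  obtain ⟨c, hc_count, hc_sub⟩ := hSsep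
  haveI := hc_count.to_subtype
  choose g hg1 hg2 using fun s : c => exists_dual_vector'' ℝ (s : E)
  -- the functionals g separate points of S
  have hsepS : ∀ z ∈ S, (∀ s : c, g s z = 0) → z = 0 := by
    intro z hz hgz
    by_contra hz0
    have hzpos : 0 < ‖z‖ := norm_pos_iff.mpr hz0
    obtain ⟨s, hs, hdist⟩ := Metric.mem_closure_iff.mp (hc_sub hz) (‖z‖ / 3) (by positivity)
    rw [dist_eq_norm] at hdist
    set s' : c := ⟨s, hs⟩
    have h1 : g s' s = ‖s‖ := hg2 s'
    have h2 : |g s' (z - s)| ≤ ‖z - s‖ := by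
      calc |g s' (z - s)| ≤ ‖g s'‖ * ‖z - s‖ := (g s').le_opNorm _
        _ ≤ 1 * ‖z - s‖ := by
            have := hg1 s'
            have h0 : (0:ℝ) ≤ ‖z - s‖ := norm_nonneg _
            nlinarith
        _ = ‖z - s‖ := one_mul _
    have h3 : g s' z = g s' s + g s' (z - s) := by rw [map_sub]; ring
    have h4 : ‖z‖ - ‖z - s‖ ≤ ‖s‖ := by
      have := norm_sub_norm_le z s
      linarith [abs_le.mp (abs_norm_sub_norm_le z s)]
    have h5 : -‖z - s‖ ≤ g s' (z - s) := (abs_le.mp h2).1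
    have h6 := hgz s'
    rw [h3, h1] at h6
    linarith
  -- weak closedness of S
  have hSw : IsClosed (toWeakSpace ℝ E '' (S : Set E)) := by
    have h2 := Convex.toWeakSpace_closure ℝ ((Submodule.span ℝ (Set.range v)).convex.closure)
    rw [closure_closure] at h2
    rw [hS, Submodule.topologicalClosure_coe, ← closure_eq_iff_isClosed, ← h2]
  set K₀ : Set (WeakSpace ℝ E) := K ∩ (toWeakSpace ℝ E '' (S : Set E)) with hK₀def
  have hK₀ : IsCompact K₀ := hK.inter_right hSw
  have hvS : ∀ k, v k ∈ S := fun k =>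
    (Submodule.span ℝ (Set.range v)).le_topologicalClosure
      (Submodule.subset_span (Set.mem_range_self k))
  have hvK₀ : ∀ k, toWeakSpace ℝ E (v k) ∈ K₀ :=
    fun k => ⟨hv k, ⟨v k, hvS k, rfl⟩⟩
  -- the coordinate map
  set Φ : WeakSpace ℝ E → (c → ℝ) := fun w s => g s ((toWeakSpace ℝ E).symm w) with hΦ
  have hΦc : Continuous Φ :=
    continuous_pi fun s => WeakBilin.eval_continuous _ (g s)
  haveI : CompactSpace K₀ := isCompact_iff_compactSpace.mp hK₀
  set ψ : K₀ → (c → ℝ) := fun a => Φ a.val with hψ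
  have hψc : Continuous ψ := hΦc.comp continuous_subtype_val
  have hψinj : Function.Injective ψ := by
    intro a b hab
    obtain ⟨ha1, za, hzaS, hza⟩ := a.2
    obtain ⟨hb1, zb, hzbS, hzb⟩ := b.2
    have hza' : (toWeakSpace ℝ E).symm a.val = za := by rw [← hza]; simp
    have hzb' : (toWeakSpace ℝ E).symm b.val = zb := by rw [← hzb]; simp
    have hzz : za - zb = 0 := by
      refine hsepS _ (S.sub_mem hzaS hzbS) fun s => ?_
      have := congrFun hab s
      rw [hψ] at this
      simp only [hΦ, hza', hzb'] at this
      rw [map_sub, this, sub_self]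
    have : za = zb := by rwa [sub_eq_zero] at hzz
    apply Subtype.ext
    rw [← hza, ← hzb, this]
  set e : K₀ ≃ Set.range ψ := Equiv.ofInjective ψ hψinj with he
  have hec : Continuous e := hψc.subtype_mk _
  let h : K₀ ≃ₜ Set.range ψ := hec.homeoOfEquivCompactToT2 (f := e)
  set a : ℕ → K₀ := fun k => ⟨toWeakSpace ℝ E (v k), hvK₀ k⟩ with ha
  haveI : CompactSpace (Set.range ψ) := isCompact_iff_compactSpace.mp (isCompact_range hψc)
  obtain ⟨p, φ, hφ, hconv⟩ := CompactSpace.tendsto_subseq (fun k => h (a k))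
  have hconv' : Tendsto (fun k => a (φ k)) atTop (nhds (h.symm p)) := by
    have h2 := (h.symm.continuous.tendsto p).comp hconv
    simpa [Function.comp_def] using h2
  have hval : Tendsto (fun k => (a (φ k) : WeakSpace ℝ E)) atTop
      (nhds ((h.symm p : K₀) : WeakSpace ℝ E)) :=
    (continuous_subtype_val.tendsto _).comp hconv'
  refine ⟨(toWeakSpace ℝ E).symm ((h.symm p : K₀) : WeakSpace ℝ E), φ, hφ, ?_⟩
  have h0 : Tendsto (fun k => ((a (φ k) : WeakSpace ℝ E) - ((h.symm p : K₀) : WeakSpace ℝ E)))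
      atTop (nhds (((h.symm p : K₀) : WeakSpace ℝ E) - ((h.symm p : K₀) : WeakSpace ℝ E))) :=
    hval.sub tendsto_const_nhds
  rw [sub_self] at h0
  exact h0

end Helper

/-- Let `E` be a Banach space with the Dunford–Pettis property and `M ⊆ E` a closed
subspace with `E/M` infinite-dimensional and reflexive.  Then there is no sequence `(V_n)`
of weakly compact operators on `E` with `‖Q - Q ∘ V_n‖ → 0`, where `Q` is the quotient
map; in particular `E` fails the inner W.A.P. -/
theorem stmt_10 {E : Type} [NormedAddCommGroup E] [NormedSpace ℝ E] [CompleteSpace E]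
    (hDPP : HasDPP E)
    (M : Submodule ℝ E) (hMclosed : IsClosed (M : Set E))
    (hinf : ¬ FiniteDimensional ℝ (E ⧸ M))
    (hrefl : IsWeaklyCompact (Metric.closedBall (0 : E ⧸ M) 1))
    (Q : E →L[ℝ] E ⧸ M) (hQ : ∀ x : E, Q x = Submodule.Quotient.mk x) :
    ¬ ∃ V : ℕ → E →L[ℝ] E, (∀ n, IsWeaklyCompactOp (V n)) ∧
      Tendsto (fun n => ‖Q - Q.comp (V n)‖) atTop (nhds 0) := by
  rintro ⟨V, hVwc, hVlim⟩
  haveI : IsClosed (M : Set E) := hMclosed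
  -- a separated sequence in the quotient
  obtain ⟨R, y, hR, hyR, hsep⟩ := exists_seq_norm_le_one_le_norm_sub (𝕜 := ℝ) hinf
  have hR1 : (0:ℝ) < R + 1 := by linarith
  -- lift it
  have hlift : ∀ k, ∃ m : E, Submodule.Quotient.mk m = y k ∧ ‖m‖ < ‖y k‖ + 1 :=
    fun k => Submodule.Quotient.norm_mk_lt (y k) one_pos
  choose x hx hxn using hlift
  have hxR : ∀ k, ‖x k‖ ≤ R + 1 := fun k => by
    have := hxn k; have := hyR k; linarith
  -- pick a good W
  have hε : (0:ℝ) < 1 / (4 * (R + 1)) := by positivity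
  obtain ⟨n₀, hn₀⟩ := (hVlim.eventually_lt_const hε).exists
  set W := V n₀ with hW
  -- separation after applying W
  have happrox : ∀ k, ‖Q (x k) - Q (W (x k))‖ ≤ 1 / 4 := by
    intro k
    have h1 : ‖(Q - Q.comp W) (x k)‖ ≤ ‖Q - Q.comp W‖ * ‖x k‖ := (Q - Q.comp W).le_opNorm _
    have h2 : (Q - Q.comp W) (x k) = Q (x k) - Q (W (x k)) := by simp
    rw [h2] at h1
    have h3 : ‖Q - Q.comp W‖ * ‖x k‖ ≤ (1 / (4 * (R + 1))) * (R + 1) := by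
      apply mul_le_mul hn₀.le (hxR k) (norm_nonneg _) hε.le
    have h4 : (1 / (4 * (R + 1))) * (R + 1) = 1 / 4 := by field_simp
    linarith
  have hsepW : ∀ i j, i ≠ j → 1 / 2 ≤ ‖Q (W (x i)) - Q (W (x j))‖ := by
    intro i j hij
    have h0 : Q (x i) - Q (x j) = y i - y j := by rw [hQ, hQ, hx, hx]
    have h1 : (1:ℝ) ≤ ‖Q (x i) - Q (x j)‖ := by rw [h0]; exact hsep hij
    have h2 := happrox i
    have h3 := happrox j
    have h4 : Q (x i) - Q (x j) =
        (Q (x i) - Q (W (x i))) + (Q (W (x i)) - Q (W (x j))) - (Q (x j) - Q (W (x j))) := by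
      abel
    have h5 : ‖Q (x i) - Q (x j)‖ ≤
        ‖Q (x i) - Q (W (x i))‖ + ‖Q (W (x i)) - Q (W (x j))‖ + ‖Q (x j) - Q (W (x j))‖ := by
      rw [h4]
      exact (norm_sub_le _ _).trans (by gcongr; exact norm_add_le _ _)
    linarith
  -- normalized sequence inside the unit ball
  set u : ℕ → E := fun k => (R + 1)⁻¹ • x k with hu
  have humem : ∀ k, u k ∈ Metric.closedBall (0:E) 1 := by
    intro k
    rw [Metric.mem_closedBall, dist_zero_right, hu]
    simp only [norm_smul, norm_inv, Real.norm_eq_abs, abs_of_pos hR1]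
    calc (R + 1)⁻¹ * ‖x k‖ ≤ (R + 1)⁻¹ * (R + 1) := by
          apply mul_le_mul_of_nonneg_left (hxR k) (by positivity)
      _ = 1 := inv_mul_cancel₀ hR1.ne'
  set v : ℕ → E := fun k => W (u k) with hv
  have hvK : ∀ k, toWeakSpace ℝ E (v k) ∈
      closure (toWeakSpace ℝ E '' (W '' Metric.closedBall 0 1)) :=
    fun k => subset_closure ⟨W (u k), ⟨u k, humem k, rfl⟩, rfl⟩
  obtain ⟨ylim, φ, hφ, hweak⟩ := exists_subseq_weak_tendsto (hVwc n₀) v hvK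
  -- the normalized quotient map is weakly compact
  set Q' : E →L[ℝ] E ⧸ M := (‖Q‖ + 1)⁻¹ • Q with hQ'
  have hQn : (0:ℝ) < ‖Q‖ + 1 := by positivity
  have hQ'wc : IsWeaklyCompactOp Q' := by
    have hTclosed : IsClosed (toWeakSpace ℝ (E ⧸ M) '' Metric.closedBall 0 1) := by
      have h1 := Convex.toWeakSpace_closure ℝ (convex_closedBall (0 : E ⧸ M) 1)
      rw [Metric.isClosed_closedBall.closure_eq] at h1
      rw [← closure_eq_iff_isClosed, ← h1]
    have hsub : Q' '' Metric.closedBall 0 1 ⊆ Metric.closedBall (0 : E ⧸ M) 1 := by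
      rintro _ ⟨z, hz, rfl⟩
      rw [Metric.mem_closedBall, dist_zero_right] at hz ⊢
      have h1 : Q' z = (‖Q‖ + 1)⁻¹ • Q z := rfl
      rw [h1, norm_smul, norm_inv, Real.norm_eq_abs, abs_of_pos hQn]
      have h2 : ‖Q z‖ ≤ ‖Q‖ := by
        have := Q.le_opNorm z
        nlinarith [norm_nonneg Q]
      have h3 : (‖Q‖ + 1)⁻¹ * ‖Q z‖ ≤ (‖Q‖ + 1)⁻¹ * (‖Q‖ + 1) := by
        apply mul_le_mul_of_nonneg_left (by linarith) (by positivity)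
      rw [inv_mul_cancel₀ hQn.ne'] at h3
      exact h3
    have hsub2 : closure (toWeakSpace ℝ (E ⧸ M) '' (Q' '' Metric.closedBall 0 1)) ⊆
        toWeakSpace ℝ (E ⧸ M) '' Metric.closedBall 0 1 :=
      closure_minimal (Set.image_mono hsub) hTclosed
    exact hrefl.of_isClosed_subset isClosed_closure hsub2
  -- apply DPP
  have hkey := hDPP (E ⧸ M) inferInstance inferInstance inferInstance Q' hQ'wc
    (fun k => v (φ k) - ylim) hweak
  -- convert to a statement about Q
  have hQtend : Tendsto (fun k => ‖Q (v (φ k)) - Q ylim‖) atTop (nhds 0) := by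
    have h1 : ∀ k, ‖Q (v (φ k)) - Q ylim‖ = (‖Q‖ + 1) * ‖Q' (v (φ k) - ylim)‖ := by
      intro k
      have h2 : Q' (v (φ k) - ylim) = (‖Q‖ + 1)⁻¹ • (Q (v (φ k)) - Q ylim) := by
        simp only [hQ', ContinuousLinearMap.smul_apply, map_sub, smul_sub]
      rw [h2, norm_smul, norm_inv, Real.norm_eq_abs, abs_of_pos hQn, ← mul_assoc,
        mul_inv_cancel₀ hQn.ne', one_mul]
    have h3 := hkey.const_mul (‖Q‖ + 1)
    rw [mul_zero] at h3
    simpa only [← h1] using h3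
  -- separation at the level of v
  have hsepv : ∀ i j, i ≠ j → (R + 1)⁻¹ * (1 / 2) ≤ ‖Q (v i) - Q (v j)‖ := by
    intro i j hij
    have h1 : Q (v i) - Q (v j) = (R + 1)⁻¹ • (Q (W (x i)) - Q (W (x j))) := by
      rw [hv]
      simp only [hu, map_smul, smul_sub]
    rw [h1, norm_smul, norm_inv, Real.norm_eq_abs, abs_of_pos hR1]
    exact mul_le_mul_of_nonneg_left (hsepW i j hij) (by positivity)
  -- contradiction
  have hδ : (0:ℝ) < (R + 1)⁻¹ * (1 / 4) := by positivity
  obtain ⟨N, hN⟩ := (hQtend.eventually_lt_const hδ).exists_forall_of_atTop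
  have hij : φ N ≠ φ (N + 1) := (hφ (Nat.lt_succ_self N)).ne
  have h1 := hsepv (φ N) (φ (N + 1)) hij
  have h2 := hN N le_rfl
  have h3 := hN (N + 1) (Nat.le_succ N)
  have h4 : ‖Q (v (φ N)) - Q (v (φ (N + 1)))‖ ≤
      ‖Q (v (φ N)) - Q ylim‖ + ‖Q (v (φ (N + 1))) - Q ylim‖ := by
    rw [show Q (v (φ N)) - Q (v (φ (N + 1))) =
      (Q (v (φ N)) - Q ylim) - (Q (v (φ (N + 1))) - Q ylim) by abel]
    exact norm_sub_le _ _
  have h5 : (R + 1)⁻¹ * (1 / 2) = (R + 1)⁻¹ * (1 / 4) + (R + 1)⁻¹ * (1 / 4) := by ring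
  linarith
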